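/- Let H be an acyclic hypergraph and x a vertex contained in two distinct maximal hyperedges of H. Then x has two neighbors a and b that are not neighbors of each other (i.e., there is a chordless path a–x–b). -/

import Mathlib

/-- Two vertices are neighbors in a hypergraph if some hyperedge contains both. -/
def Nbr {V : Type*} (E : Finset (Finset V)) (x y : V) : Prop :=
  ∃ e ∈ E, x ∈ e ∧ y ∈ e

/-- Join tree: a tree on the hyperedges with the running intersection property. -/
def IsJoinTreeOf {V ι : Type*} (T : SimpleGraph ι) (lab : ι → Finset V)
    (E : Finset (Finset V)) : Prop :=
  T.IsTree ∧ (∀ i, lab i ∈ E) ∧ (∀ e ∈ E, ∃ i, lab i = e) ∧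
    ∀ v : V, (T.induce {i | v ∈ lab i}).Preconnected

/-- A hypergraph is acyclic if it admits a join tree. -/
def HGAcyclic {V : Type*} (E : Finset (Finset V)) : Prop :=
  ∃ (ι : Type) (T : SimpleGraph ι) (lab : ι → Finset V), IsJoinTreeOf T lab E

/-- The maximal hyperedges of a hypergraph (w.r.t. strict containment). -/
def maximalEdges {V : Type*} [DecidableEq V] (E : Finset (Finset V)) :
    Finset (Finset V) :=
  E.filter fun e => ∀ e' ∈ E, ¬ e ⊂ e'

open SimpleGraph Walk

section Helpers
variable {ι : Type} {T : SimpleGraph ι}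

lemma tree_path_unique (hT : T.IsTree) {i j : ι} {p q : T.Walk i j}
    (hp : p.IsPath) (hq : q.IsPath) : p = q :=
  ((hT.existsUnique_path i j).unique hp hq)

lemma support_subset_of_induce_preconnected (hT : T.IsTree) {S : Set ι}
    (hS : (T.induce S).Preconnected) {i j : ι} (hi : i ∈ S) (hj : j ∈ S)
    {p : T.Walk i j} (hp : p.IsPath) : ∀ k ∈ p.support, k ∈ S := by
  classical
  obtain ⟨q0⟩ := hS ⟨i, hi⟩ ⟨j, hj⟩
  let q : T.Walk i j := q0.map (SimpleGraph.Embedding.induce S).toHom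
  have hsub : ∀ k ∈ q.support, k ∈ S := by
    intro k hk
    rw [show q.support = q0.support.map (SimpleGraph.Embedding.induce S).toHom from Walk.support_map ..] at hk
    obtain ⟨⟨k', hk'⟩, _, rfl⟩ := List.mem_map.mp hk
    exact hk'
  have hbp : q.bypass.IsPath := q.bypass_isPath
  have heq := tree_path_unique hT hp hbp
  intro k hk
  rw [heq] at hk
  exact hsub k (q.support_bypass_subset hk)

lemma second_mem_of_shared (hT : T.IsTree) {i₁ j₁ i₂ k : ι}
    (h : T.Adj i₁ j₁) {t : T.Walk j₁ i₂} (hP : (Walk.cons h t).IsPath)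
    {Q : T.Walk i₁ k} (hQ : Q.IsPath) {v : ι} (hv : v ∈ t.support)
    (hvQ : v ∈ Q.support) : j₁ ∈ Q.support := by
  classical
  have hi₁t : i₁ ∉ t.support := ((Walk.cons_isPath_iff h t).mp hP).2
  have ht : t.IsPath := ((Walk.cons_isPath_iff h t).mp hP).1
  have htt : (t.takeUntil v hv).IsPath := ht.takeUntil hv
  have hc : (Walk.cons h (t.takeUntil v hv)).IsPath :=
    htt.cons (fun hmem => hi₁t (t.support_takeUntil_subset hv hmem))
  have hQt : (Q.takeUntil v hvQ).IsPath := hQ.takeUntil hvQ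
  have heq := tree_path_unique hT hc hQt
  have hj : j₁ ∈ (Q.takeUntil v hvQ).support := by
    rw [← heq, Walk.support_cons]
    exact List.mem_cons_of_mem _ (t.takeUntil v hv).start_mem_support
  exact Q.support_takeUntil_subset hvQ hj

lemma dichotomy (hT : T.IsTree) {i₁ j₁ i₂ k : ι} (h : T.Adj i₁ j₁)
    {t : T.Walk j₁ i₂} (hP : (Walk.cons h t).IsPath)
    {Q : T.Walk i₁ k} (hQ : Q.IsPath) {R : T.Walk i₂ k} (hR : R.IsPath)
    (hj : j₁ ∉ Q.support) : ∀ w ∈ (Walk.cons h t).support, w ∈ R.support := by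
  set P := Walk.cons h t with hPdef
  have hPr : P.reverse.IsPath := hP.reverse
  have hi₁tail : i₁ ∉ Q.support.tail := by
    have := hQ.support_nodup
    rw [Q.support_eq_cons] at this
    exact (List.nodup_cons.mp this).1
  have happ : (P.reverse.append Q).IsPath := by
    rw [Walk.isPath_def, Walk.support_append]
    refine List.Nodup.append hPr.support_nodup (hQ.support_nodup.tail) ?_
    intro w hw1 hw2
    have hwP : w ∈ P.support := by
      rw [Walk.support_reverse] at hw1
      exact List.mem_reverse.mp hw1
    have hwQ : w ∈ Q.support := by
      rw [Q.support_eq_cons]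
      exact List.mem_cons_of_mem _ hw2
    have hwne : w ≠ i₁ := fun hh => hi₁tail (hh ▸ hw2)
    have hwt : w ∈ t.support := by
      rw [hPdef, Walk.support_cons] at hwP
      rcases List.mem_cons.mp hwP with h' | h'
      · exact absurd h' hwne
      · exact h'
    exact hj (second_mem_of_shared hT h hP hQ hwt hwQ)
  have heq := tree_path_unique hT happ hR
  intro w hw
  rw [← heq, Walk.support_append]
  apply List.mem_append_left
  rw [Walk.support_reverse]
  exact List.mem_reverse.mpr hw

lemma walk_cons_of_ne {u v : ι} (p : T.Walk u v) (huv : u ≠ v) :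
    ∃ (w : ι) (h : T.Adj u w) (t : T.Walk w v), p = Walk.cons h t := by
  cases p with
  | nil => exact absurd rfl huv
  | cons h t => exact ⟨_, h, t, rfl⟩

end Helpers


/-- In an acyclic hypergraph, if a vertex `x` lies in two distinct
maximal hyperedges, then `x` has two neighbors `a`, `b` that are not neighbors of
each other (a chordless path `a–x–b`). -/
theorem chordless_path_through_vertex_of_two_maximal {V : Type*} [DecidableEq V]
    (E : Finset (Finset V)) (hacyc : HGAcyclic E)
    (x : V) (e₁ e₂ : Finset V)
    (h1 : e₁ ∈ maximalEdges E) (h2 : e₂ ∈ maximalEdges E) (hne : e₁ ≠ e₂)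
    (hx1 : x ∈ e₁) (hx2 : x ∈ e₂) :
    ∃ a b : V, a ≠ x ∧ b ≠ x ∧ Nbr E x a ∧ Nbr E x b ∧ ¬ Nbr E a b := by
  classical
  obtain ⟨ι, T, lab, hTree, hlabE, hsurj, hconn⟩ := hacyc
  rw [maximalEdges, Finset.mem_filter] at h1 h2
  obtain ⟨h1E, hmax1⟩ := h1
  obtain ⟨h2E, hmax2⟩ := h2
  obtain ⟨i0, hi0⟩ := hsurj e₁ h1E
  obtain ⟨j0, hj0⟩ := hsurj e₂ h2E
  set Sn : Set ℕ := {n | ∃ i j, lab i = e₁ ∧ lab j = e₂ ∧ T.dist i j = n} with hSndef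
  have hSnne : Sn.Nonempty := ⟨_, i0, j0, hi0, hj0, rfl⟩
  obtain ⟨i₁, i₂, hl1, hl2, hd⟩ := Nat.sInf_mem hSnne
  have hmin : ∀ i j, lab i = e₁ → lab j = e₂ → sInf Sn ≤ T.dist i j :=
    fun i j a b => Nat.sInf_le ⟨i, j, a, b, rfl⟩
  obtain ⟨P, hP, hPlen⟩ := hTree.isConnected.exists_path_of_dist i₁ i₂
  have hne' : i₁ ≠ i₂ := fun hh => hne (by rw [← hl1, ← hl2, hh])
  obtain ⟨j₁, ha1, t₁, hPe⟩ := walk_cons_of_ne P hne'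
  obtain ⟨j₂, ha2, t₂, hPre⟩ := walk_cons_of_ne P.reverse hne'.symm
  -- x is in every label along P
  have hxP : ∀ k ∈ P.support, x ∈ lab k :=
    support_subset_of_induce_preconnected hTree (hconn x)
      (show x ∈ lab i₁ by rw [hl1]; exact hx1)
      (show x ∈ lab i₂ by rw [hl2]; exact hx2) hP
  have hj₁P : j₁ ∈ P.support := by
    rw [hPe, Walk.support_cons]
    exact List.mem_cons_of_mem _ t₁.start_mem_support
  have hj₂Pr : j₂ ∈ P.reverse.support := by
    rw [hPre, Walk.support_cons]
    exact List.mem_cons_of_mem _ t₂.start_mem_support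
  have hj₂P : j₂ ∈ P.support := by
    rw [Walk.support_reverse] at hj₂Pr
    exact List.mem_reverse.mp hj₂Pr
  -- lengths
  have hlen1 : P.length = t₁.length + 1 := by rw [hPe]; simp
  have hlen2 : P.length = t₂.length + 1 := by
    have : P.reverse.length = t₂.length + 1 := by rw [hPre]; simp
    rwa [Walk.length_reverse] at this
  have hdist : T.dist i₁ i₂ = sInf Sn := hd
  -- a : element of e₁ not in lab j₁
  have hnsub1 : ¬ e₁ ⊆ lab j₁ := by
    intro hsub
    rcases eq_or_lt_of_le (Finset.le_iff_subset.mpr hsub) with heq | hlt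
    · have hd2 : T.dist j₁ i₂ ≤ t₁.length := SimpleGraph.dist_le t₁
      have := hmin j₁ i₂ heq.symm hl2
      omega
    · exact hmax1 (lab j₁) (hlabE j₁) hlt
  have hnsub2 : ¬ e₂ ⊆ lab j₂ := by
    intro hsub
    rcases eq_or_lt_of_le (Finset.le_iff_subset.mpr hsub) with heq | hlt
    · have hd2 : T.dist j₂ i₁ ≤ t₂.length := SimpleGraph.dist_le t₂
      have := hmin i₁ j₂ hl1 heq.symm
      rw [SimpleGraph.dist_comm] at hd2
      omega
    · exact hmax2 (lab j₂) (hlabE j₂) hlt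
  obtain ⟨a, haE₁, haj₁⟩ := Finset.not_subset.mp hnsub1
  obtain ⟨b, hbE₂, hbj₂⟩ := Finset.not_subset.mp hnsub2
  refine ⟨a, b, ?_, ?_, ⟨e₁, h1E, hx1, haE₁⟩, ⟨e₂, h2E, hx2, hbE₂⟩, ?_⟩
  · intro hax; exact haj₁ (hax ▸ hxP j₁ hj₁P)
  · intro hbx; exact hbj₂ (hbx ▸ hxP j₂ hj₂P)
  · rintro ⟨g, hgE, hag, hbg⟩
    obtain ⟨k, hk⟩ := hsurj g hgE
    obtain ⟨Q, hQ, -⟩ := hTree.isConnected.exists_path_of_dist i₁ k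
    obtain ⟨R, hR, -⟩ := hTree.isConnected.exists_path_of_dist i₂ k
    by_cases hj : j₁ ∈ Q.support
    · have haQ : ∀ m ∈ Q.support, a ∈ lab m :=
        support_subset_of_induce_preconnected hTree (hconn a)
          (show a ∈ lab i₁ by rw [hl1]; exact haE₁)
          (show a ∈ lab k by rw [hk]; exact hag) hQ
      exact haj₁ (haQ j₁ hj)
    · have hPc : (Walk.cons ha1 t₁).IsPath := hPe ▸ hP
      have hall := dichotomy hTree ha1 hPc hQ hR hj
      have hj₂R : j₂ ∈ R.support := hall j₂ (hPe ▸ hj₂P)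
      have hbR : ∀ m ∈ R.support, b ∈ lab m :=
        support_subset_of_induce_preconnected hTree (hconn b)
          (show b ∈ lab i₂ by rw [hl2]; exact hbE₂)
          (show b ∈ lab k by rw [hk]; exact hbg) hR
      exact hbj₂ (hbR j₂ hj₂R)
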